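/- Fix 0 < τ < 1 and 1 < r < p < ∞, and assume that τ^{r−1}(1 − τ^p) ≤ 1 − τ^r and τ^{p−1}(1 − τ^r) ≤ 1 − τ^p. Then for every sequence η : {1,2,3,…} → {0,1}, the function M_η is convex on [0,1]; equivalently, for every n ≥ 1 the chord slope (M_η(τ^n) − M_η(τ^{n+1}))/(τ^n − τ^{n+1}) is at most (M_η(τ^{n−1}) − M_η(τ^n))/(τ^{n−1} − τ^n). -/

import Mathlib

open Finset in
/-- `M` is the Orlicz function `M_η` of Lindenstrauss–Tzafriri associated to
`0 < τ < 1`, `1 < r < p < ∞` and a 0-1 sequence `η`: the continuous piecewise-linear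
function on `[0,1]` with `M 0 = 0`, `M (τ^k) = τ^(rk + (p-r)·Σ_{n=1}^k η n)` for
`k ≥ 0` (in particular `M 1 = 1`), affine on each interval `[τ^(k+1), τ^k]`. -/
def IsMeta (τ r p : ℝ) (η : ℕ → ℝ) (M : ℝ → ℝ) : Prop :=
  M 0 = 0 ∧
  (∀ k : ℕ, M (τ ^ k) = τ ^ (r * (k : ℝ) + (p - r) * ∑ n ∈ Finset.Icc 1 k, η n)) ∧
  (∀ k : ℕ, ∀ x ∈ Set.Icc (τ ^ (k + 1)) (τ ^ k),
    M x = M (τ ^ (k + 1)) +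
      (x - τ ^ (k + 1)) * (M (τ ^ k) - M (τ ^ (k + 1))) / (τ ^ k - τ ^ (k + 1)))

/-- Combining slopes: if two adjacent chords have slope at most `B`, so does the big chord. -/
lemma aux_comb_le (M : ℝ → ℝ) {x y z B : ℝ} (hxy : x < y) (hyz : y < z)
    (hA : (M y - M x) / (y - x) ≤ B) (hB : (M z - M y) / (z - y) ≤ B) :
    (M z - M x) / (z - x) ≤ B := by
  rw [div_le_iff₀ (by linarith)] at hA hB ⊢
  nlinarith [hA, hB]

/-- Combining slopes: if two adjacent chords have slope at least `B`, so does the big chord. -/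
lemma aux_comb_ge (M : ℝ → ℝ) {x y z B : ℝ} (hxy : x < y) (hyz : y < z)
    (hA : B ≤ (M y - M x) / (y - x)) (hB : B ≤ (M z - M y) / (z - y)) :
    B ≤ (M z - M x) / (z - x) := by
  rw [le_div_iff₀ (by linarith)] at hA hB ⊢
  nlinarith [hA, hB]

/-- proof of Lemma 3.4. If `τ^(r-1)(1-τ^p) ≤ 1-τ^r` and
`τ^(p-1)(1-τ^r) ≤ 1-τ^p`, then `M_η` is convex on `[0,1]` for every 0-1 sequence `η`;
equivalently, the chord slopes are non-increasing. -/
theorem statement7 (τ r p : ℝ) (hτ0 : 0 < τ) (hτ1 : τ < 1) (hr : 1 < r) (hrp : r < p)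
    (h1 : τ ^ (r - 1) * (1 - τ ^ p) ≤ 1 - τ ^ r)
    (h2 : τ ^ (p - 1) * (1 - τ ^ r) ≤ 1 - τ ^ p)
    (η : ℕ → ℝ) (hη : ∀ n, η n = 0 ∨ η n = 1)
    (M : ℝ → ℝ) (hM : IsMeta τ r p η M) :
    ConvexOn ℝ (Set.Icc 0 1) M ∧
      ∀ n : ℕ, 1 ≤ n →
        (M (τ ^ n) - M (τ ^ (n + 1))) / (τ ^ n - τ ^ (n + 1)) ≤
          (M (τ ^ (n - 1)) - M (τ ^ n)) / (τ ^ (n - 1) - τ ^ n) := by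
  classical
  obtain ⟨hM0, hMk, hMaff⟩ := hM
  set s : ℕ → ℝ := fun k => (M (τ ^ k) - M (τ ^ (k + 1))) / (τ ^ k - τ ^ (k + 1)) with hs
  -- basic facts about powers of τ
  have hT : ∀ k : ℕ, (0:ℝ) < τ ^ k := fun k => pow_pos hτ0 k
  have hTlt : ∀ k : ℕ, τ ^ (k + 1) < τ ^ k := fun k =>
    pow_lt_pow_right_of_lt_one₀ hτ0 hτ1 (Nat.lt_succ_self k)
  have hTle : ∀ i j : ℕ, i ≤ j → τ ^ j ≤ τ ^ i := fun i j h =>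
    pow_le_pow_of_le_one hτ0.le hτ1.le h
  -- exponents
  set c : ℕ → ℝ := fun k => r + (p - r) * η (k + 1) with hc
  set e : ℕ → ℝ := fun k => r * (k : ℝ) + (p - r) * ∑ n ∈ Finset.Icc 1 k, η n with he
  have ha : ∀ k : ℕ, M (τ ^ k) = τ ^ e k := fun k => hMk k
  have hec : ∀ k : ℕ, e (k + 1) = e k + c k := by
    intro k
    simp only [he, hc]
    rw [Finset.sum_Icc_succ_top (by omega : 1 ≤ k + 1)]
    push_cast
    ring
  have hc_cases : ∀ k, c k = r ∨ c k = p := by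
    intro k
    rcases hη (k + 1) with h | h
    · left; simp [hc, h]
    · right; simp [hc, h]
  have key : ∀ k, τ ^ (c k - 1) * (1 - τ ^ c (k + 1)) ≤ 1 - τ ^ c k := by
    have hrr : τ ^ (r - 1) * (1 - τ ^ r) ≤ 1 - τ ^ r := by
      have hle : τ ^ (r - 1) ≤ 1 := Real.rpow_le_one hτ0.le hτ1.le (by linarith)
      have hle2 : τ ^ (r : ℝ) ≤ 1 := Real.rpow_le_one hτ0.le hτ1.le (by linarith)
      nlinarith [Real.rpow_nonneg hτ0.le (r - 1)]
    have hpp : τ ^ (p - 1) * (1 - τ ^ p) ≤ 1 - τ ^ p := by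
      have hle : τ ^ (p - 1) ≤ 1 := Real.rpow_le_one hτ0.le hτ1.le (by linarith)
      have hle2 : τ ^ (p : ℝ) ≤ 1 := Real.rpow_le_one hτ0.le hτ1.le (by linarith)
      nlinarith [Real.rpow_nonneg hτ0.le (p - 1)]
    intro k
    rcases hc_cases k with h | h <;> rcases hc_cases (k + 1) with h' | h' <;> rw [h, h']
    · exact hrr
    · exact h1
    · exact h2
    · exact hpp
  have hak : ∀ k, 0 < M (τ ^ k) := by
    intro k; rw [ha]; exact Real.rpow_pos_of_pos hτ0 _
  have hmul : ∀ k, M (τ ^ (k + 1)) = M (τ ^ k) * τ ^ c k := by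
    intro k; rw [ha, ha, hec, Real.rpow_add hτ0]
  -- the fundamental slope step
  have hstep : ∀ k, s (k + 1) ≤ s k := by
    intro k
    have hD : ∀ j : ℕ, (0:ℝ) < τ ^ j - τ ^ (j + 1) := fun j => sub_pos.2 (hTlt j)
    simp only [hs]
    rw [div_le_div_iff₀ (hD (k + 1)) (hD k)]
    have hτc : τ * τ ^ (c k - 1) = τ ^ c k := by
      nth_rewrite 1 [← Real.rpow_one τ]
      rw [← Real.rpow_add hτ0]
      congr 1
      ring
    have hkey2 : τ ^ c k * (1 - τ ^ c (k + 1)) ≤ τ * (1 - τ ^ c k) :=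
      calc τ ^ c k * (1 - τ ^ c (k + 1))
          = τ * (τ ^ (c k - 1) * (1 - τ ^ c (k + 1))) := by rw [← mul_assoc, hτc]
        _ ≤ τ * (1 - τ ^ c k) := mul_le_mul_of_nonneg_left (key k) hτ0.le
    have em2 : M (τ ^ (k + 2)) = M (τ ^ (k + 1)) * τ ^ c (k + 1) := hmul (k + 1)
    have em1 : M (τ ^ (k + 1)) = M (τ ^ k) * τ ^ c k := hmul k
    have hp1 : τ ^ (k + 1) = τ ^ k * τ := pow_succ τ k
    have hp2 : τ ^ (k + 2) = τ ^ k * τ * τ := by rw [pow_succ, pow_succ]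
    rw [em2, em1, hp1, hp2]
    have hnn : (0:ℝ) ≤ M (τ ^ k) * τ ^ k :=
      mul_nonneg (hak k).le (hT k).le
    nlinarith [mul_le_mul_of_nonneg_left hkey2 hnn, hak k, hT k]
  -- monotonicity of slopes
  have hs_mono : ∀ i j : ℕ, i ≤ j → s j ≤ s i := by
    intro i j h
    induction h with
    | refl => exact le_rfl
    | step h ih => exact (hstep _).trans ih
  -- affine pieces have slope exactly `s k`
  have haff : ∀ (k : ℕ) (x y : ℝ), τ ^ (k + 1) ≤ x → x < y → y ≤ τ ^ k →
      (M y - M x) / (y - x) = s k := by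
    intro k x y hx hxy hy
    have hx' := hMaff k x ⟨hx, (lt_of_lt_of_le hxy hy).le⟩
    have hy' := hMaff k y ⟨le_trans hx hxy.le, hy⟩
    have hD : τ ^ k - τ ^ (k + 1) ≠ 0 := ne_of_gt (sub_pos.2 (hTlt k))
    have hyx : y - x ≠ 0 := sub_ne_zero.2 (ne_of_gt hxy)
    simp only [hs]
    rw [hx', hy']
    field_simp
    ring
  -- locating points in the dyadic-type grid
  have htend : Filter.Tendsto (fun n : ℕ => τ ^ n) Filter.atTop (nhds 0) :=
    tendsto_pow_atTop_nhds_zero_of_lt_one hτ0.le hτ1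
  have hex1 : ∀ y : ℝ, 0 < y → y ≤ 1 → ∃ k : ℕ, τ ^ (k + 1) < y ∧ y ≤ τ ^ k := by
    intro y hy0 hy1
    have hev : ∃ n : ℕ, τ ^ n < y := (htend.eventually_lt_const hy0).exists
    have hn : τ ^ (Nat.find hev) < y := Nat.find_spec hev
    have hn0 : Nat.find hev ≠ 0 := by
      intro h
      rw [h] at hn
      simp at hn
      linarith
    obtain ⟨k, hk⟩ := Nat.exists_eq_succ_of_ne_zero hn0
    refine ⟨k, by rw [show k + 1 = Nat.find hev by omega]; exact hn, not_lt.1 (Nat.find_min hev ?_)⟩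
    omega
  have hex2 : ∀ x : ℝ, 0 < x → x < 1 → ∃ m : ℕ, τ ^ (m + 1) ≤ x ∧ x < τ ^ m := by
    intro x hx0 hx1
    have hev : ∃ n : ℕ, τ ^ n ≤ x := ⟨_, ((htend.eventually_lt_const hx0).exists).choose_spec.le⟩
    have hn : τ ^ (Nat.find hev) ≤ x := Nat.find_spec hev
    have hn0 : Nat.find hev ≠ 0 := by
      intro h
      rw [h] at hn
      simp at hn
      linarith
    obtain ⟨m, hm⟩ := Nat.exists_eq_succ_of_ne_zero hn0
    refine ⟨m, by rw [show m + 1 = Nat.find hev by omega]; exact hn, not_le.1 (Nat.find_min hev ?_)⟩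
    omega
  -- upper bound for chords ending in piece k
  have h_up : ∀ (d k : ℕ) (x y : ℝ), τ ^ (k + d + 1) ≤ x → x < τ ^ (k + d) →
      τ ^ (k + 1) < y → y ≤ τ ^ k → x < y → (M y - M x) / (y - x) ≤ s k := by
    intro d
    induction d with
    | zero =>
      intro k x y hx _ _ hy' hxy
      exact le_of_eq (haff k x y hx hxy hy')
    | succ d ih =>
      intro k x y hx hx' hy hy' hxy
      have e1 : k + 1 + d = k + d + 1 := Nat.add_right_comm k 1 d
      have hw1 : x < τ ^ (k + 1) := lt_of_lt_of_le hx' (hTle (k + 1) (k + d + 1) (by omega))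
      have hA : (M (τ ^ (k + 1)) - M x) / (τ ^ (k + 1) - x) ≤ s (k + 1) :=
        ih (k + 1) x (τ ^ (k + 1)) (by rw [e1]; exact hx) (by rw [e1]; exact hx')
          (hTlt (k + 1)) le_rfl hw1
      have hB : (M y - M (τ ^ (k + 1))) / (y - τ ^ (k + 1)) = s k :=
        haff k (τ ^ (k + 1)) y le_rfl hy hy'
      exact aux_comb_le M hw1 hy (hA.trans (hstep k)) (le_of_eq hB)
  -- lower bound for chords starting in piece j + d, ending in piece j
  have h_low : ∀ (d j : ℕ) (x z : ℝ), τ ^ (j + d + 1) ≤ x → x < τ ^ (j + d) →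
      τ ^ (j + 1) < z → z ≤ τ ^ j → x < z → s (j + d) ≤ (M z - M x) / (z - x) := by
    intro d
    induction d with
    | zero =>
      intro j x z hx _ _ hz' hxz
      exact ge_of_eq (haff j x z hx hxz hz')
    | succ d ih =>
      intro j x z hx hx' hz hz' hxz
      have hwz : τ ^ (j + d + 1) < z := lt_of_le_of_lt (hTle (j + 1) (j + d + 1) (by omega)) hz
      have hA : (M (τ ^ (j + d + 1)) - M x) / (τ ^ (j + d + 1) - x) = s (j + d + 1) :=
        haff (j + d + 1) x (τ ^ (j + d + 1)) hx hx' le_rfl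
      have hB : s (j + d) ≤ (M z - M (τ ^ (j + d + 1))) / (z - τ ^ (j + d + 1)) :=
        ih j (τ ^ (j + d + 1)) z le_rfl (hTlt (j + d)) hz hz' hwz
      exact aux_comb_ge M hx' hwz hA.ge ((hstep (j + d)).trans hB)
  -- the three-point slope inequality on (0,1]
  have slope3' : ∀ x y z : ℝ, 0 < x → x < y → y < z → z ≤ 1 →
      (M y - M x) / (y - x) ≤ (M z - M y) / (z - y) := by
    intro x y z hx0 hxy hyz hz1
    obtain ⟨k, hk1, hk2⟩ := hex1 y (by linarith) (by linarith)
    obtain ⟨k', hk'1, hk'2⟩ := hex2 y (by linarith) (by linarith)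
    obtain ⟨m, hm1, hm2⟩ := hex2 x (by linarith) (by linarith)
    obtain ⟨j, hj1, hj2⟩ := hex1 z (by linarith) hz1
    have hmk : k ≤ m := by
      by_contra h
      have : τ ^ k ≤ τ ^ (m + 1) := hTle (m + 1) k (by omega)
      linarith
    have hjk' : j ≤ k' := by
      by_contra h
      have : τ ^ j ≤ τ ^ (k' + 1) := hTle (k' + 1) j (by omega)
      linarith
    have hk'k : k' ≤ k := by
      by_contra h
      have : τ ^ k' ≤ τ ^ (k + 1) := hTle (k + 1) k' (by omega)
      linarith
    have hup : (M y - M x) / (y - x) ≤ s k := by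
      have hkd : k + (m - k) = m := by omega
      exact h_up (m - k) k x y (by rw [hkd]; exact hm1) (by rw [hkd]; exact hm2) hk1 hk2 hxy
    have hlow : s k' ≤ (M z - M y) / (z - y) := by
      have hkd : j + (k' - j) = k' := by omega
      have := h_low (k' - j) j y z (by rw [hkd]; exact hk'1) (by rw [hkd]; exact hk'2) hj1 hj2 hyz
      rwa [hkd] at this
    exact hup.trans ((hs_mono k' k hk'k).trans hlow)
  -- extend to x = 0 by a limiting argument
  have slope3 : ∀ x y z : ℝ, 0 ≤ x → x < y → y < z → z ≤ 1 →
      (M y - M x) / (y - x) ≤ (M z - M y) / (z - y) := by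
    intro x y z hx0 hxy hyz hz1
    rcases eq_or_lt_of_le hx0 with h | h
    swap
    · exact slope3' x y z h hxy hyz hz1
    subst h
    have hy0 : 0 < y := hxy
    have hMa0 : Filter.Tendsto (fun i : ℕ => M (τ ^ i)) Filter.atTop (nhds 0) := by
      have hb : ∀ i : ℕ, M (τ ^ i) ≤ ((τ : ℝ) ^ (r : ℝ)) ^ i := by
        intro i
        rw [ha]
        have hei : r * (i : ℝ) ≤ e i := by
          simp only [he]
          have hsum : 0 ≤ ∑ n ∈ Finset.Icc 1 i, η n :=
            Finset.sum_nonneg fun n _ => by rcases hη n with h | h <;> simp [h]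
          nlinarith
        calc τ ^ e i ≤ τ ^ (r * (i : ℝ)) :=
              Real.rpow_le_rpow_of_exponent_ge hτ0 hτ1.le hei
          _ = ((τ : ℝ) ^ (r : ℝ)) ^ i := by
              rw [Real.rpow_mul hτ0.le, Real.rpow_natCast]
      have hlim : Filter.Tendsto (fun i : ℕ => ((τ : ℝ) ^ (r : ℝ)) ^ i) Filter.atTop (nhds 0) :=
        tendsto_pow_atTop_nhds_zero_of_lt_one (Real.rpow_nonneg hτ0.le r)
          (Real.rpow_lt_one hτ0.le hτ1 (by linarith))
      exact tendsto_of_tendsto_of_tendsto_of_le_of_le tendsto_const_nhds hlim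
        (fun i => (hak i).le) hb
    have hten : Filter.Tendsto (fun i : ℕ => (M y - M (τ ^ i)) / (y - τ ^ i)) Filter.atTop
        (nhds ((M y - 0) / (y - 0))) := by
      exact Filter.Tendsto.div (tendsto_const_nhds.sub hMa0) (tendsto_const_nhds.sub htend)
        (by simp [ne_of_gt hy0])
    have hev : ∀ᶠ i : ℕ in Filter.atTop,
        (M y - M (τ ^ i)) / (y - τ ^ i) ≤ (M z - M y) / (z - y) := by
      filter_upwards [htend.eventually_lt_const hy0] with i hi
      exact slope3' (τ ^ i) y z (hT i) hi hyz hz1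
    have := le_of_tendsto hten hev
    rw [hM0]
    simpa using this
  constructor
  · refine convexOn_of_slope_mono_adjacent (convex_Icc 0 1) ?_
    intro x y z hx hz hxy hyz
    exact slope3 x y z hx.1 hxy hyz hz.2
  · intro n hn
    obtain ⟨m, rfl⟩ : ∃ m : ℕ, n = m + 1 := ⟨n - 1, by omega⟩
    have h := hstep m
    simp only [hs] at h
    simpa using h
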